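/- For every integer j ≥ 2 and every integer t with 0 < t < 2^j and t ≠ 2^{j−1}, the binomial coefficient satisfies C(2^j, t) ≡ 0 (mod 4). -/

import Mathlib

/-- For `j ≥ 2` and `0 < t < 2^j` with `t ≠ 2^(j-1)`, `C(2^j, t) ≡ 0 (mod 4)`. -/
theorem binom_two_pow_mod_four (j t : ℕ) (hj : 2 ≤ j) (ht0 : 0 < t) (ht1 : t < 2 ^ j)
    (ht2 : t ≠ 2 ^ (j - 1)) :
    Nat.choose (2 ^ j) t ≡ 0 [MOD 4] := by
  have hp : Nat.Prime 2 := Nat.prime_two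
  have ht0' : t ≠ 0 := ht0.ne'
  set m := multiplicity 2 t with hm
  have hdvd : 2 ^ m ∣ t := pow_multiplicity_dvd 2 t
  have hfin : FiniteMultiplicity 2 t := Nat.finiteMultiplicity_iff.2 ⟨by norm_num, ht0⟩
  have hmlt : m ≤ j - 2 := by
    by_contra h
    push_neg at h
    -- m ≥ j - 1
    have hmj : m < j := by
      by_contra h'
      push_neg at h'
      have : 2 ^ j ≤ t := le_trans (Nat.pow_le_pow_right (by norm_num) h') (Nat.le_of_dvd ht0 hdvd)
      omega
    have hmeq : m = j - 1 := by omega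
    obtain ⟨c, hc⟩ := hdvd
    have hco : ¬ 2 ∣ c := by
      intro ⟨d, hd⟩
      have : 2 ^ (m + 1) ∣ t := ⟨d, by rw [hc, hd]; ring⟩
      exact hfin.not_pow_dvd_of_multiplicity_lt (by omega) this
    have hc1 : c = 1 := by
      rcases Nat.even_or_odd c with he | ho
      · exact absurd he.two_dvd hco
      · have : c < 2 := by
          by_contra hge
          push_neg at hge
          have : 2 ^ (m + 1) ≤ t := by
            calc 2 ^ (m + 1) = 2 ^ m * 2 := by ring
            _ ≤ 2 ^ m * c := by exact Nat.mul_le_mul_left _ hge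
            _ = t := hc.symm
          have : 2 ^ j ≤ t := le_trans (Nat.pow_le_pow_right (by norm_num) (by omega)) this
          omega
        omega
    exact ht2 (by rw [hc, hc1, hmeq, mul_one])
  have he : emultiplicity 2 ((2 ^ j).choose t) = ((j - m : ℕ) : ℕ∞) :=
    Nat.Prime.emultiplicity_choose_prime_pow hp ht1.le ht0'
  have h4 : (2 : ℕ) ^ 2 ∣ (2 ^ j).choose t := by
    apply pow_dvd_of_le_emultiplicity
    rw [he]
    exact_mod_cast Nat.le_sub_of_add_le (by omega)
  have : (4 : ℕ) ∣ (2 ^ j).choose t := by norm_num at h4 ⊢; exact h4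
  exact (Nat.modEq_zero_iff_dvd).2 this
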